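/- arXiv:1303.6013 — 3 statements merged into one kernel-verified Lean document; each statement's English description precedes it below -/
import Mathlib

section
/- For all u, v in a Coxeter group W, the element u' = (u · v) v⁻¹ satisfies u' ≤ u in the Bruhat order, and u' v is a reduced product (ℓ(u' v) = ℓ(u') + ℓ(v)) with u' v = u · v. -/
noncomputable section

namespace CoxeterSystem

variable {B W : Type*} [Group W] {M : CoxeterMatrix B} (cs : CoxeterSystem M W)

/-- one step of the Hecke (Demazure) product: multiply by a simple reflection -/
def heckeStep (u : W) (i : B) : W :=
  if cs.length u < cs.length (u * cs.simple i) then u * cs.simple i else u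

/-- the Hecke product of `u` with the product of a word `l` -/
def heckeWord (u : W) (l : List B) : W := l.foldl cs.heckeStep u

/-- the Hecke (Demazure) product on `W`, computed via a chosen reduced word for the
second argument -/
def heckeMul (u v : W) : W := cs.heckeWord u (cs.exists_reduced_word' v).choose

/-- the Bruhat order on `W`, via the subword property -/
def bruhatLE (u w : W) : Prop :=
  ∃ l l' : List B, cs.IsReduced l ∧ cs.wordProd l = w ∧
    l'.Sublist l ∧ cs.wordProd l' = u

/-- the (right) inversion set of `w`, as a set of reflections -/
def invSet (w : W) : Set W := {t | cs.IsRightInversion w t}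

end CoxeterSystem

end

noncomputable section

open scoped Classical
open List

namespace CoxeterSystem

variable {B W : Type*} [Group W] {M : CoxeterMatrix B} (cs : CoxeterSystem M W)

local prefix:100 "s" => cs.simple
local prefix:100 "π" => cs.wordProd
local prefix:100 "ℓ" => cs.length
local prefix:100 "ris" => cs.rightInvSeq

/-- Auxiliary involution on `W × ℤˣ` used to prove the exchange property. -/
def sigmaFun (i : B) (p : W × ℤˣ) : W × ℤˣ :=
  (s i * p.1 * s i, if p.1 = s i then -p.2 else p.2)

lemma simple_conj_iff (i : B) (t : W) : s i * t * s i = s i ↔ t = s i := by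
  constructor
  · intro hc
    have h3 : s i * t = 1 := by
      apply mul_right_cancel (b := s i)
      rw [hc, one_mul]
    have h4 : (s i)⁻¹ = t := inv_eq_of_mul_eq_one_right h3
    rw [← h4, cs.inv_simple]
  · rintro rfl
    simp [mul_assoc, cs.simple_mul_simple_cancel_left, cs.simple_mul_simple_self]

lemma sigmaFun_involutive (i : B) : Function.Involutive (cs.sigmaFun i) := by
  rintro ⟨t, ε⟩
  show (s i * (s i * t * s i) * s i,
      if s i * t * s i = s i then -(if t = s i then -ε else ε)
      else (if t = s i then -ε else ε)) = (t, ε)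
  rw [Prod.mk.injEq]
  constructor
  · simp [mul_assoc, cs.simple_mul_simple_cancel_left, cs.simple_mul_simple_self]
  · by_cases h : t = s i
    · simp only [if_pos ((cs.simple_conj_iff i t).mpr h), if_pos h]
      simp
    · simp only [if_neg (fun hh => h ((cs.simple_conj_iff i t).mp hh)), if_neg h]

/-- The involution `sigmaFun` as a permutation. -/
def sigmaPerm (i : B) : Equiv.Perm (W × ℤˣ) :=
  Function.Involutive.toPerm (cs.sigmaFun i) (cs.sigmaFun_involutive i)

@[simp] lemma sigmaPerm_apply (i : B) (p : W × ℤˣ) : cs.sigmaPerm i p = cs.sigmaFun i p := rfl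

lemma sigma_pow_apply (i j : B) (m : ℕ) (t : W) (ε : ℤˣ) :
    ((cs.sigmaPerm i * cs.sigmaPerm j) ^ m) (t, ε) =
      ((s i * s j) ^ m * t * (s j * s i) ^ m,
        ε * ∏ c ∈ Finset.range (2 * m),
          (if (s j * s i) ^ c * s j = t then (-1 : ℤˣ) else 1)) := by
  induction m generalizing t ε with
  | zero => simp
  | succ m ih =>
    have hcomm : ∀ (g : W) (c : ℕ), g * g ^ c = g ^ c * g := fun g c =>
      (pow_succ' g c).symm.trans (pow_succ g c)
    have conj_eq : ∀ u : W, s i * (s j * u * s j) * s i = (s j * s i)⁻¹ * u * (s j * s i) := by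
      intro u
      rw [mul_inv_rev, cs.inv_simple, cs.inv_simple]
      simp [mul_assoc]
    have hY : ∀ c : ℕ, (s j * s i) * ((s j * s i) ^ c * s j) * (s j * s i)⁻¹
        = (s j * s i) ^ (2 + c) * s j := by
      intro c
      have e1 : (s j * s i) * ((s j * s i) ^ c * s j) * (s j * s i)⁻¹
          = ((s j * s i) ^ c * (s j * s i)) * (s j * (s j * s i)⁻¹) := by
        rw [← hcomm]
        simp [mul_assoc]
      rw [e1]
      have e2 : s j * (s j * s i)⁻¹ = (s j * s i) * s j := by
        rw [mul_inv_rev, cs.inv_simple, cs.inv_simple, mul_assoc]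
      rw [e2, show 2 + c = c + 1 + 1 from by omega, pow_succ, pow_succ]
      simp [mul_assoc]
    have hiff_shift : ∀ c : ℕ,
        ((s j * s i) ^ c * s j = s i * (s j * t * s j) * s i) ↔
          ((s j * s i) ^ (2 + c) * s j = t) := by
      intro c
      rw [conj_eq t]
      constructor
      · intro h
        have h2 : (s j * s i) * ((s j * s i) ^ c * s j) * (s j * s i)⁻¹ = t := by
          rw [h]; group
        rw [← h2, hY c]
      · intro h
        have hA : ∀ g a : W, g⁻¹ * (g * a * g⁻¹) * g = a := by
          intro g a; group
        have h3 := hY c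
        rw [h] at h3
        rw [← h3]
        exact (hA _ _).symm
    have happ : ((cs.sigmaPerm i * cs.sigmaPerm j) ^ (m + 1)) (t, ε)
        = ((cs.sigmaPerm i * cs.sigmaPerm j) ^ m) ((cs.sigmaPerm i * cs.sigmaPerm j) (t, ε)) := by
      rw [pow_succ, Equiv.Perm.mul_apply]
    have hg : (cs.sigmaPerm i * cs.sigmaPerm j) (t, ε)
        = (s i * (s j * t * s j) * s i,
            (if s j * t * s j = s i then (-1 : ℤˣ) else 1) *
              ((if t = s j then (-1 : ℤˣ) else 1) * ε)) := by
      rw [Equiv.Perm.mul_apply]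
      show (s i * (s j * t * s j) * s i,
          if s j * t * s j = s i then -(if t = s j then -ε else ε)
          else (if t = s j then -ε else ε)) = _
      rw [Prod.mk.injEq]
      refine ⟨rfl, ?_⟩
      by_cases h2 : s j * t * s j = s i <;> by_cases h1 : t = s j
      · simp only [if_pos h1, if_pos h2]; simp
      · simp only [if_pos h2, if_neg h1]; simp
      · simp only [if_neg h2, if_pos h1]; simp
      · simp only [if_neg h2, if_neg h1]; simp
    rw [happ, hg, ih]
    rw [Prod.mk.injEq]
    constructor
    · rw [pow_succ (s i * s j), pow_succ' (s j * s i)]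
      simp [mul_assoc]
    · have h2m : 2 * (m + 1) = 2 + 2 * m := by ring
      rw [h2m, Finset.prod_range_add]
      have hr2 : ∏ c ∈ Finset.range 2,
          (if (s j * s i) ^ c * s j = t then (-1 : ℤˣ) else 1)
          = (if t = s j then (-1 : ℤˣ) else 1) *
              (if s j * t * s j = s i then (-1 : ℤˣ) else 1) := by
        rw [show (2 : ℕ) = 1 + 1 from rfl, Finset.prod_range_succ, Finset.prod_range_one]
        congr 1
        · exact if_congr (by rw [pow_zero, one_mul]; exact eq_comm) rfl rfl
        · refine if_congr ?_ rfl rfl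
          rw [pow_one]
          constructor
          · rintro rfl
            simp [mul_assoc, cs.simple_mul_simple_cancel_left, cs.simple_mul_simple_self]
          · intro h
            have ht : t = s j * s i * s j := by
              rw [← h]
              simp [mul_assoc, cs.simple_mul_simple_cancel_left, cs.simple_mul_simple_self]
            rw [ht, mul_assoc]
      have hshift : ∏ c ∈ Finset.range (2 * m),
          (if (s j * s i) ^ (2 + c) * s j = t then (-1 : ℤˣ) else 1)
          = ∏ c ∈ Finset.range (2 * m),
            (if (s j * s i) ^ c * s j = s i * (s j * t * s j) * s i then (-1 : ℤˣ) else 1) :=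
        Finset.prod_congr rfl (fun c _ => if_congr (hiff_shift c).symm rfl rfl)
      rw [hshift, hr2]
      simp only [mul_comm, mul_left_comm, mul_assoc]

lemma sigma_braid (i j : B) : (cs.sigmaPerm i * cs.sigmaPerm j) ^ M i j = 1 := by
  refine Equiv.ext fun p => ?_
  obtain ⟨t, ε⟩ := p
  rw [Equiv.Perm.one_apply, sigma_pow_apply, cs.simple_mul_simple_pow i j,
    cs.simple_mul_simple_pow' i j]
  have hprod : ∏ c ∈ Finset.range (2 * M i j),
      (if (s j * s i) ^ c * s j = t then (-1 : ℤˣ) else 1) = 1 := by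
    rw [show 2 * M i j = M i j + M i j from by ring, Finset.prod_range_add]
    have : ∀ c, (if (s j * s i) ^ (M i j + c) * s j = t then (-1 : ℤˣ) else 1)
        = (if (s j * s i) ^ c * s j = t then (-1 : ℤˣ) else 1) := by
      intro c
      rw [pow_add, cs.simple_mul_simple_pow' i j, one_mul]
    simp only [this]
    exact Int.units_mul_self _
  rw [hprod]
  simp

/-- The permutation representation of `W` on `W × ℤˣ`. -/
def permRep : W →* Equiv.Perm (W × ℤˣ) :=
  cs.lift ⟨fun i => cs.sigmaPerm i, fun i j => cs.sigma_braid i j⟩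

@[simp] lemma permRep_simple (i : B) : cs.permRep (s i) = cs.sigmaPerm i :=
  cs.lift_apply_simple (fun i j => cs.sigma_braid i j) i

lemma permRep_wordProd (ω : List B) (t : W) (ε : ℤˣ) :
    cs.permRep (π ω) (t, ε) =
      (π ω * t * (π ω)⁻¹,
        ε * ((ris ω).map (fun u => if u = t then (-1 : ℤˣ) else 1)).prod) := by
  induction ω generalizing t ε with
  | nil => simp
  | cons i ω ih =>
    rw [wordProd_cons, map_mul, Equiv.Perm.mul_apply, ih, permRep_simple]
    have hris : ris (i :: ω) = ((π ω)⁻¹ * s i * π ω) :: ris ω := rfl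
    rw [hris, List.map_cons, List.prod_cons, sigmaPerm_apply]
    have hiff : (π ω * t * (π ω)⁻¹ = s i) ↔ ((π ω)⁻¹ * s i * π ω = t) := by
      constructor
      · intro h; rw [← h]; group
      · intro h; rw [← h]; group
    rw [Prod.mk.injEq]
    constructor
    · show s i * (π ω * t * (π ω)⁻¹) * s i = (s i * π ω) * t * (s i * π ω)⁻¹
      rw [mul_inv_rev, cs.inv_simple]
      simp [mul_assoc]
    · show (if π ω * t * (π ω)⁻¹ = s i then -(ε * _) else ε * _) = _
      by_cases hc : (π ω)⁻¹ * s i * π ω = t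
      · rw [if_pos (hiff.mpr hc), if_pos hc]
        simp [mul_comm, mul_left_comm, mul_assoc]
      · rw [if_neg (fun hh => hc (hiff.mp hh)), if_neg hc, one_mul]

lemma prod_map_ite_of_not_mem {l : List W} {t : W} (h : t ∉ l) :
    (l.map (fun u => if u = t then (-1 : ℤˣ) else 1)).prod = 1 := by
  apply List.prod_eq_one
  intro x hx
  obtain ⟨u, hu, rfl⟩ := List.mem_map.mp hx
  rw [if_neg]
  intro h'
  exact h (h' ▸ hu)

lemma prod_map_ite_of_nodup_of_mem {l : List W} {t : W} (hl : l.Nodup) (h : t ∈ l) :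
    (l.map (fun u => if u = t then (-1 : ℤˣ) else 1)).prod = -1 := by
  obtain ⟨l₁, l₂, rfl⟩ := List.append_of_mem h
  rw [List.nodup_append] at hl
  have h2 : t ∉ l₂ := (List.nodup_cons.mp hl.2.1).1
  have h1 : t ∉ l₁ := fun ht => hl.2.2 t ht t List.mem_cons_self rfl
  rw [List.map_append, List.prod_append, List.map_cons, List.prod_cons, if_pos rfl,
    prod_map_ite_of_not_mem h1, prod_map_ite_of_not_mem h2]
  simp

/-- Exchange property (membership form): if right multiplication by `s i` decreases length,
then `s i` belongs to the right inversion sequence of any reduced word. -/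
lemma simple_mem_rightInvSeq {ω : List B} (hω : cs.IsReduced ω) {i : B}
    (h : ℓ (π ω * s i) < ℓ (π ω)) : s i ∈ ris ω := by
  obtain ⟨ω₁, hω₁red, hω₁⟩ := cs.exists_reduced_word' (π ω * s i)
  have hπ2 : π (ω₁.concat i) = π ω := by
    rw [wordProd_concat, ← hω₁, cs.simple_mul_simple_cancel_right]
  have hω1len : ℓ (π ω₁) = ω₁.length := hω₁red
  have hωlen : ℓ (π ω) = ω.length := hω
  have hlsi : ℓ (π ω * s i) + 1 = ℓ (π ω) := by
    rcases cs.length_mul_simple (π ω) i with h' | h'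
    · omega
    · exact h'
  have hred2 : cs.IsReduced (ω₁.concat i) := by
    show ℓ (π (ω₁.concat i)) = (ω₁.concat i).length
    rw [hπ2, List.length_concat, ← hω1len, ← hω₁]
    omega
  have hmem2 : s i ∈ ris (ω₁.concat i) := by
    rw [cs.rightInvSeq_concat]
    simp
  by_contra hmem
  have e1 := cs.permRep_wordProd ω (s i) 1
  have e2 := cs.permRep_wordProd (ω₁.concat i) (s i) 1
  rw [hπ2, e1] at e2
  have esign := congrArg Prod.snd e2
  simp only at esign
  rw [prod_map_ite_of_not_mem hmem,
    prod_map_ite_of_nodup_of_mem (hred2.nodup_rightInvSeq) hmem2] at esign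
  simp at esign

/-- Exchange property: deleting a letter. -/
lemma exists_eraseIdx_of_descent {ω : List B} (hω : cs.IsReduced ω) {i : B}
    (h : ℓ (π ω * s i) < ℓ (π ω)) :
    ∃ j, j < ω.length ∧ π ω * s i = π (ω.eraseIdx j) := by
  have hmem := cs.simple_mem_rightInvSeq hω h
  obtain ⟨j, hj, hget⟩ := List.getElem_of_mem hmem
  have hj' : j < ω.length := by simpa using hj
  refine ⟨j, hj', ?_⟩
  have hgetD : (ris ω).getD j 1 = s i := by
    rw [List.getD_eq_getElem _ _ hj, hget]
  have := cs.wordProd_mul_getD_rightInvSeq ω j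
  rw [hgetD] at this
  exact this

/-- Key lemma: the Hecke product of `u` with a reduced word `l` factors as `π l' * π l`
with `l'` a sublist of a reduced word for `u` and the product reduced. -/
lemma hecke_key : ∀ (l : List B), cs.IsReduced l → ∀ u : W,
    ∃ lu l' : List B, cs.IsReduced lu ∧ π lu = u ∧ l'.Sublist lu ∧ cs.IsReduced l' ∧
      cs.heckeWord u l = π l' * π l ∧
      ℓ (cs.heckeWord u l) = ℓ (π l') + l.length := by
  intro l
  induction l using List.reverseRecOn with
  | nil =>
    intro _ u
    obtain ⟨lu, hred, hu⟩ := cs.exists_reduced_word' u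
    exact ⟨lu, lu, hred, hu.symm, List.Sublist.refl _, hred,
      by simp [heckeWord, hu], by simp [heckeWord, hu]⟩
  | append_singleton l₁ i ih =>
    intro hl u
    have hl₁ : cs.IsReduced l₁ := by
      have := hl.take l₁.length
      rwa [List.take_left] at this
    obtain ⟨lu, l', hlured, hπlu, hsub, hl'red, hprod, hlen⟩ := ih hl₁ u
    have hfold : cs.heckeWord u (l₁ ++ [i]) = cs.heckeStep (cs.heckeWord u l₁) i := by
      simp [heckeWord, List.foldl_append]
    set w := cs.heckeWord u l₁ with hw
    have hπl : π (l₁ ++ [i]) = π l₁ * s i := by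
      rw [wordProd_append, wordProd_singleton]
    have hl'len : ℓ (π l') = l'.length := hl'red
    have hllen : ℓ (π (l₁ ++ [i])) = l₁.length + 1 := by
      have h' : ℓ (π (l₁ ++ [i])) = (l₁ ++ [i]).length := hl
      simpa using h'
    rcases cs.length_mul_simple w i with hinc | hdec
    · have hstep : cs.heckeStep w i = w * s i := by
        rw [heckeStep, if_pos]
        omega
      refine ⟨lu, l', hlured, hπlu, hsub, hl'red, ?_, ?_⟩
      · rw [hfold, hstep, hπl, hprod, mul_assoc]
      · rw [hfold, hstep, hinc, hlen, List.length_append]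
        simp
        omega
    · have hstep : cs.heckeStep w i = w := by
        rw [heckeStep, if_neg]
        omega
      have hωprod : π (l' ++ l₁) = w := by
        rw [wordProd_append, ← hprod]
      have hωred : cs.IsReduced (l' ++ l₁) := by
        show ℓ (π (l' ++ l₁)) = (l' ++ l₁).length
        rw [hωprod, List.length_append]
        omega
      have hdesc : ℓ (π (l' ++ l₁) * s i) < ℓ (π (l' ++ l₁)) := by
        rw [hωprod]
        omega
      obtain ⟨j, hjlt, hjer⟩ := cs.exists_eraseIdx_of_descent hωred hdesc
      have hπl₁si : ℓ (π l₁ * s i) = l₁.length + 1 := by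
        rw [← hπl]
        exact hllen
      have hjlt' : j < l'.length := by
        by_contra hge
        push_neg at hge
        have her : (l' ++ l₁).eraseIdx j = l' ++ l₁.eraseIdx (j - l'.length) :=
          List.eraseIdx_append_of_length_le hge _
        rw [hωprod] at hjer
        rw [her, wordProd_append] at hjer
        have hcanc : π l₁ * s i = π (l₁.eraseIdx (j - l'.length)) := by
          have h' : π l' * π l₁ * s i = π l' * π (l₁.eraseIdx (j - l'.length)) := by
            rw [← hjer, ← hprod]
          rw [mul_assoc] at h'
          exact mul_left_cancel h'
        have h1 : ℓ (π l₁ * s i) ≤ (l₁.eraseIdx (j - l'.length)).length := by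
          rw [hcanc]
          exact cs.length_wordProd_le _
        have h2 : (l₁.eraseIdx (j - l'.length)).length + 1 = l₁.length := by
          apply List.length_eraseIdx_add_one
          rw [List.length_append] at hjlt
          omega
        omega
      have her : (l' ++ l₁).eraseIdx j = l'.eraseIdx j ++ l₁ :=
        List.eraseIdx_append_of_lt_length hjlt' _
      rw [hωprod, her, wordProd_append] at hjer
      have hkey : w = π (l'.eraseIdx j) * π (l₁ ++ [i]) := by
        rw [hπl, hprod, ← mul_assoc, ← hjer, cs.simple_mul_simple_cancel_right, ← hprod]
      have hlen'' : (l'.eraseIdx j).length + 1 = l'.length :=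
        List.length_eraseIdx_add_one hjlt'
      have hlen2 : ℓ (π (l'.eraseIdx j)) = (l'.eraseIdx j).length := by
        have hle := cs.length_wordProd_le (l'.eraseIdx j)
        have hmul := cs.length_mul_le (π (l'.eraseIdx j)) (π (l₁ ++ [i]))
        rw [← hkey] at hmul
        omega
      refine ⟨lu, l'.eraseIdx j, hlured, hπlu, (List.eraseIdx_sublist l' j).trans hsub,
        hlen2, ?_, ?_⟩
      · rw [hfold, hstep, hkey]
      · rw [hfold, hstep]
        have hlapp : (l₁ ++ [i]).length = l₁.length + 1 := by simp
        rw [hlapp]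
        omega

end CoxeterSystem

end

/-- The element `u' = (u · v) v⁻¹` satisfies `u' ≤ u`, the product `u' v` is reduced,
and `u' v = u · v`. -/
theorem heckeMul_factor
    {B W : Type*} [Group W] {M : CoxeterMatrix B} (cs : CoxeterSystem M W)
    (u v : W) :
    cs.bruhatLE (cs.heckeMul u v * v⁻¹) u ∧
    cs.length (cs.heckeMul u v * v⁻¹ * v) =
      cs.length (cs.heckeMul u v * v⁻¹) + cs.length v ∧
    cs.heckeMul u v * v⁻¹ * v = cs.heckeMul u v := by
  obtain ⟨hredl, hvl⟩ := (cs.exists_reduced_word' v).choose_spec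
  have hmul : cs.heckeMul u v = cs.heckeWord u (cs.exists_reduced_word' v).choose := rfl
  obtain ⟨lu, l', hlured, hπlu, hsub, hl'red, hprod, hlen⟩ :=
    cs.hecke_key (cs.exists_reduced_word' v).choose hredl u
  have hπl : cs.wordProd (cs.exists_reduced_word' v).choose = v := hvl.symm
  have hfac : cs.heckeMul u v * v⁻¹ = cs.wordProd l' := by
    rw [hmul, hprod, hπl, mul_inv_cancel_right]
  have hcanc : cs.heckeMul u v * v⁻¹ * v = cs.heckeMul u v := inv_mul_cancel_right _ _
  refine ⟨?_, ?_, hcanc⟩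
  · show ∃ l l' : List B, cs.IsReduced l ∧ cs.wordProd l = u ∧
      l'.Sublist l ∧ cs.wordProd l' = cs.heckeMul u v * v⁻¹
    exact ⟨lu, l', hlured, hπlu, hsub, hfac.symm⟩
  · rw [hcanc, hfac, hmul, hlen]
    have hredl' : cs.length (cs.wordProd (cs.exists_reduced_word' v).choose)
        = (cs.exists_reduced_word' v).choose.length := hredl
    rw [hπl] at hredl'
    omega
end

section
/- For all u, v in a Coxeter group W, the inversion set of v is contained in the inversion set of the Hecke product u · v: I(v) ⊆ I(u · v). -/
/- ### Auxiliary development: the strong exchange property, and the key invariant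
for the Hecke product. -/

noncomputable section

namespace CoxeterSystem

open List Classical

variable {B W : Type*} [Group W] {M : CoxeterMatrix B} (cs : CoxeterSystem M W)

/-- the raw reflection-cocycle map associated to a simple reflection -/
private def refAux (i : B) (x : W × ZMod 2) : W × ZMod 2 :=
  (cs.simple i * x.1 * cs.simple i, x.2 + if x.1 = cs.simple i then 1 else 0)

private lemma conj_cancel (i : B) {a b : W} (h : cs.simple i * a * cs.simple i = b) :
    a = cs.simple i * b * cs.simple i := by
  rw [← h]
  simp [mul_assoc, cs.simple_mul_simple_self, cs.simple_mul_simple_cancel_left]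

private lemma simple_conj_eq_iff (i : B) (t : W) :
    cs.simple i * t * cs.simple i = cs.simple i ↔ t = cs.simple i := by
  constructor
  · intro h
    rw [cs.conj_cancel i h, cs.simple_mul_simple_self, one_mul]
  · rintro rfl
    rw [cs.simple_mul_simple_self, one_mul]

private lemma refAux_refAux (i : B) (x : W × ZMod 2) : cs.refAux i (cs.refAux i x) = x := by
  obtain ⟨t, e⟩ := x
  have h1 : cs.simple i * (cs.simple i * t * cs.simple i) * cs.simple i = t := by
    simp [mul_assoc, cs.simple_mul_simple_self, cs.simple_mul_simple_cancel_left]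
  have h2 := cs.simple_conj_eq_iff i t
  simp only [refAux, h1, h2]
  rcases eq_or_ne t (cs.simple i) with rfl | h
  · have h3 : ∀ a : ZMod 2, a + 1 + 1 = a := by decide
    simp [h3]
  · simp [h]

/-- the reflection-cocycle permutation associated to a simple reflection -/
private def refPerm (i : B) : Equiv.Perm (W × ZMod 2) :=
  ⟨cs.refAux i, cs.refAux i, cs.refAux_refAux i, cs.refAux_refAux i⟩

private lemma refPerm_apply (i : B) (x : W × ZMod 2) :
    cs.refPerm i x = (cs.simple i * x.1 * cs.simple i, x.2 + if x.1 = cs.simple i then 1 else 0) :=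
  rfl

private lemma simple_mul_pow_conj (i j : B) (k : ℕ) :
    cs.simple j * (cs.simple i * cs.simple j) ^ k * cs.simple j =
      ((cs.simple i * cs.simple j) ^ k)⁻¹ := by
  have h : cs.simple j * (cs.simple i * cs.simple j) * (cs.simple j)⁻¹ =
      (cs.simple i * cs.simple j)⁻¹ := by
    simp [mul_assoc, cs.simple_mul_simple_self, cs.inv_simple, mul_inv_rev]
  calc cs.simple j * (cs.simple i * cs.simple j) ^ k * cs.simple j
      = cs.simple j * (cs.simple i * cs.simple j) ^ k * (cs.simple j)⁻¹ := by
        rw [cs.inv_simple]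
    _ = (cs.simple j * (cs.simple i * cs.simple j) * (cs.simple j)⁻¹) ^ k := by
        rw [conj_pow]
    _ = ((cs.simple i * cs.simple j) ^ k)⁻¹ := by rw [h, inv_pow]

private lemma inv_pow_mul_simple (i j : B) (k : ℕ) :
    ((cs.simple i * cs.simple j) ^ k)⁻¹ * cs.simple j =
      cs.simple j * (cs.simple i * cs.simple j) ^ k := by
  have := cs.simple_mul_pow_conj i j k
  calc ((cs.simple i * cs.simple j) ^ k)⁻¹ * cs.simple j
      = cs.simple j * (cs.simple i * cs.simple j) ^ k * cs.simple j * cs.simple j := by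
        rw [this]
    _ = cs.simple j * (cs.simple i * cs.simple j) ^ k := by
        rw [cs.simple_mul_simple_cancel_right]

private lemma refPerm_mul_pow_apply (i j : B) (k : ℕ) (t : W) (e : ZMod 2) :
    ((cs.refPerm i * cs.refPerm j) ^ k) (t, e) =
      ((cs.simple i * cs.simple j) ^ k * t * ((cs.simple i * cs.simple j) ^ k)⁻¹,
        e + ∑ r ∈ Finset.range (2 * k),
          if t = cs.simple j * (cs.simple i * cs.simple j) ^ r then 1 else 0) := by
  set p := cs.simple i * cs.simple j with hp
  induction k with
  | zero => simp
  | succ k ih =>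
    rw [pow_succ', Equiv.Perm.mul_apply, ih, Equiv.Perm.mul_apply, refPerm_apply,
      refPerm_apply]
    have hcond1 : (p ^ k * t * (p ^ k)⁻¹ = cs.simple j) ↔ (t = cs.simple j * p ^ (2 * k)) := by
      have : (p ^ k)⁻¹ * cs.simple j * p ^ k = cs.simple j * p ^ (2 * k) := by
        rw [cs.inv_pow_mul_simple i j k, mul_assoc, ← pow_add, two_mul]
      rw [← this]
      constructor
      · intro h; rw [← h]; group
      · intro h; rw [h]; group
    have hcond2 : (cs.simple j * (p ^ k * t * (p ^ k)⁻¹) * cs.simple j = cs.simple i) ↔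
        (t = cs.simple j * p ^ (2 * k + 1)) := by
      have key : (p ^ k)⁻¹ * (cs.simple j * cs.simple i * cs.simple j) * p ^ k =
          cs.simple j * p ^ (2 * k + 1) := by
        have h1 : (p ^ k)⁻¹ * cs.simple j = cs.simple j * p ^ k :=
          cs.inv_pow_mul_simple i j k
        calc (p ^ k)⁻¹ * (cs.simple j * cs.simple i * cs.simple j) * p ^ k
            = ((p ^ k)⁻¹ * cs.simple j) * (cs.simple i * cs.simple j) * p ^ k := by
              group
          _ = cs.simple j * p ^ k * p * p ^ k := by rw [h1, hp]
          _ = cs.simple j * p ^ (2 * k + 1) := by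
              have hpp : p ^ k * (p * p ^ k) = p ^ (2 * k + 1) := by
                rw [← pow_succ', ← pow_add]
                congr 1
                ring
              rw [mul_assoc, mul_assoc, hpp]
      constructor
      · intro h
        have ht : cs.simple j * (p ^ k * t * (p ^ k)⁻¹) * cs.simple j = cs.simple i := h
        have : p ^ k * t * (p ^ k)⁻¹ = cs.simple j * cs.simple i * cs.simple j := by
          have h5 := cs.conj_cancel j ht
          rw [h5]
        have : t = (p ^ k)⁻¹ * (cs.simple j * cs.simple i * cs.simple j) * p ^ k := by
          rw [← this]; group
        rw [this, key]
      · intro h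
        have ht : t = (p ^ k)⁻¹ * (cs.simple j * cs.simple i * cs.simple j) * p ^ k := by
          rw [key, h]
        rw [ht]
        have : p ^ k * ((p ^ k)⁻¹ * (cs.simple j * cs.simple i * cs.simple j) * p ^ k) *
            (p ^ k)⁻¹ = cs.simple j * cs.simple i * cs.simple j := by group
        rw [this]
        simp [mul_assoc, cs.simple_mul_simple_self, cs.simple_mul_simple_cancel_left]
    refine Prod.ext ?_ ?_
    · show cs.simple i * (cs.simple j * (p ^ k * t * (p ^ k)⁻¹) * cs.simple j) * cs.simple i =
        p ^ (k + 1) * t * (p ^ (k + 1))⁻¹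
      have hpinv : (cs.simple j) * (cs.simple i) = p⁻¹ := by
        rw [hp, mul_inv_rev, cs.inv_simple, cs.inv_simple]
      calc cs.simple i * (cs.simple j * (p ^ k * t * (p ^ k)⁻¹) * cs.simple j) * cs.simple i
          = (cs.simple i * cs.simple j) * (p ^ k * t * (p ^ k)⁻¹) *
              (cs.simple j * cs.simple i) := by group
        _ = p * (p ^ k * t * (p ^ k)⁻¹) * p⁻¹ := by rw [hp, hpinv]
        _ = p ^ (k + 1) * t * (p ^ (k + 1))⁻¹ := by
            rw [pow_succ']
            group
    · show e + (∑ r ∈ Finset.range (2 * k),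
          if t = cs.simple j * p ^ r then (1 : ZMod 2) else 0) +
          (if p ^ k * t * (p ^ k)⁻¹ = cs.simple j then 1 else 0) +
          (if cs.simple j * (p ^ k * t * (p ^ k)⁻¹) * cs.simple j = cs.simple i then 1 else 0) =
        e + ∑ r ∈ Finset.range (2 * (k + 1)),
          if t = cs.simple j * p ^ r then 1 else 0
      have h2k : 2 * (k + 1) = (2 * k + 1) + 1 := by ring
      rw [h2k, Finset.sum_range_succ, Finset.sum_range_succ]
      simp only [hcond1, hcond2]
      push_cast
      ring
  done

private lemma isLiftable_refPerm : M.IsLiftable cs.refPerm := by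
  intro i j
  apply Equiv.ext
  rintro ⟨t, e⟩
  rw [Equiv.Perm.one_apply, cs.refPerm_mul_pow_apply i j (M i j) t e]
  rw [cs.simple_mul_simple_pow i j]
  refine Prod.ext ?_ ?_
  · show (1 : W) * t * (1 : W)⁻¹ = t
    simp
  show e + (∑ r ∈ Finset.range (2 * M i j),
      if t = cs.simple j * (cs.simple i * cs.simple j) ^ r then (1 : ZMod 2) else 0) = e
  have hsplit : (2 : ℕ) * M i j = M i j + M i j := two_mul _
  rw [hsplit, Finset.sum_range_add]
  have hperiod : ∀ r : ℕ,
      (if t = cs.simple j * (cs.simple i * cs.simple j) ^ (M i j + r) then (1 : ZMod 2) else 0) =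
      (if t = cs.simple j * (cs.simple i * cs.simple j) ^ r then (1 : ZMod 2) else 0) := by
    intro r
    congr 1
    rw [pow_add, cs.simple_mul_simple_pow i j, one_mul]
  rw [Finset.sum_congr rfl (fun r _ => hperiod r)]
  have : ∀ a : ZMod 2, a + a = 0 := by decide
  rw [this, add_zero]

/-- the reflection-cocycle homomorphism -/
private def refHom : W →* Equiv.Perm (W × ZMod 2) :=
  cs.lift ⟨cs.refPerm, cs.isLiftable_refPerm⟩

private lemma refHom_simple (i : B) : cs.refHom (cs.simple i) = cs.refPerm i :=
  cs.lift_apply_simple cs.isLiftable_refPerm i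

private lemma refHom_wordProd (ω : List B) (t : W) (e : ZMod 2) :
    cs.refHom (cs.wordProd ω) (t, e) =
      (cs.wordProd ω * t * (cs.wordProd ω)⁻¹,
        e + ((cs.rightInvSeq ω).count t : ZMod 2)) := by
  induction ω generalizing e with
  | nil => simp [rightInvSeq]
  | cons i ω ih =>
    rw [cs.wordProd_cons, map_mul, Equiv.Perm.mul_apply, ih, cs.refHom_simple,
      refPerm_apply]
    have hris : cs.rightInvSeq (i :: ω) =
        (cs.wordProd ω)⁻¹ * cs.simple i * cs.wordProd ω :: cs.rightInvSeq ω := rfl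
    have hcond : (cs.wordProd ω * t * (cs.wordProd ω)⁻¹ = cs.simple i) ↔
        ((cs.wordProd ω)⁻¹ * cs.simple i * cs.wordProd ω = t) := by
      constructor
      · intro h; rw [← h]; group
      · intro h; rw [← h]; group
    refine Prod.ext ?_ ?_
    · show cs.simple i * (cs.wordProd ω * t * (cs.wordProd ω)⁻¹) * cs.simple i =
        (cs.simple i * cs.wordProd ω) * t * (cs.simple i * cs.wordProd ω)⁻¹
      rw [mul_inv_rev, cs.inv_simple]
      group
    · show e + ((cs.rightInvSeq ω).count t : ZMod 2) +
          (if cs.wordProd ω * t * (cs.wordProd ω)⁻¹ = cs.simple i then 1 else 0) =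
        e + (((cs.rightInvSeq (i :: ω)).count t : ℕ) : ZMod 2)
      rw [hris, List.count_cons]
      simp only [hcond, beq_iff_eq]
      rcases Classical.em ((cs.wordProd ω)⁻¹ * cs.simple i * cs.wordProd ω = t) with h | h
      · simp only [if_pos h]
        push_cast
        ring
      · simp only [if_neg h]
        push_cast
        ring

private lemma refHom_apply (w t : W) (e : ZMod 2) :
    cs.refHom w (t, e) = (w * t * w⁻¹, e + (cs.refHom w (t, 0)).2) := by
  obtain ⟨ω, rfl⟩ := cs.wordProd_surjective w
  rw [cs.refHom_wordProd, cs.refHom_wordProd, zero_add]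

private lemma refHom_reflection_self {t : W} (ht : cs.IsReflection t) :
    cs.refHom t (t, 0) = (t, 1) := by
  obtain ⟨y, i, rfl⟩ := ht
  set t := y * cs.simple i * y⁻¹ with htdef
  have hconj : y⁻¹ * t * (y⁻¹)⁻¹ = cs.simple i := by rw [htdef]; group
  set c := (cs.refHom y⁻¹ ((t : W), (0 : ZMod 2))).2 with hc
  have h1 : cs.refHom y⁻¹ (t, 0) = (cs.simple i, c) := by
    rw [cs.refHom_apply, zero_add, hconj]
  set d := (cs.refHom y ((cs.simple i : W), (0 : ZMod 2))).2 with hd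
  have h2 : ∀ e : ZMod 2, cs.refHom y (cs.simple i, e) = (t, e + d) := by
    intro e
    rw [cs.refHom_apply, htdef]
  have hcd : c + d = 0 := by
    have : cs.refHom y (cs.refHom y⁻¹ (t, 0)) = (t, 0) := by
      rw [← Equiv.Perm.mul_apply, ← map_mul, mul_inv_cancel, map_one, Equiv.Perm.one_apply]
    rw [h1, h2] at this
    exact congrArg Prod.snd this
  have hstep : cs.refHom (cs.simple i) (cs.simple i, c) = (cs.simple i, c + 1) := by
    rw [cs.refHom_simple, refPerm_apply]
    simp [cs.simple_mul_simple_self, cs.simple_mul_simple_cancel_right]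
  calc cs.refHom t (t, 0)
      = cs.refHom (y * cs.simple i * y⁻¹) (t, 0) := by rw [htdef]
    _ = cs.refHom y (cs.refHom (cs.simple i) (cs.refHom y⁻¹ (t, 0))) := by
        rw [← Equiv.Perm.mul_apply, ← Equiv.Perm.mul_apply, ← map_mul, ← map_mul,
          mul_assoc]
    _ = (t, 1) := by
        rw [h1, hstep, h2]
        rw [show c + 1 + d = (c + d) + 1 by ring, hcd, zero_add]

/-- the strong exchange property (membership form): every right inversion of `π ω`
appears in the right inversion sequence of `ω`, provided `ω` is reduced. -/
private lemma mem_rightInvSeq_of_isRightInversion {ω : List B} (hω : cs.IsReduced ω) {t : W}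
    (ht : cs.IsRightInversion (cs.wordProd ω) t) : t ∈ cs.rightInvSeq ω := by
  by_contra hmem
  have hcount : (cs.rightInvSeq ω).count t = 0 := List.count_eq_zero.mpr hmem
  have h0 : (cs.refHom (cs.wordProd ω) ((t : W), (0 : ZMod 2))).2 = 0 := by
    rw [cs.refHom_wordProd, hcount]
    push_cast
    ring
  have h1 : (cs.refHom (cs.wordProd ω * t) ((t : W), (0 : ZMod 2))).2 = 1 := by
    rw [map_mul, Equiv.Perm.mul_apply, cs.refHom_reflection_self ht.1, cs.refHom_apply,
      h0, add_zero]
  obtain ⟨ω₂, hω₂, hprod₂⟩ := cs.exists_reduced_word' (cs.wordProd ω * t)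
  have h2 : (((cs.rightInvSeq ω₂).count t : ℕ) : ZMod 2) = 1 := by
    have h3 := cs.refHom_wordProd ω₂ t 0
    rw [← hprod₂] at h3
    have h4 := congrArg Prod.snd h3
    simp only at h4
    rw [h4, zero_add] at h1
    exact h1
  have hmem₂ : t ∈ cs.rightInvSeq ω₂ := by
    by_contra hmem₂
    rw [List.count_eq_zero.mpr hmem₂] at h2
    simp only [Nat.cast_zero] at h2
    exact absurd h2 (by decide)
  have hinv₂ : cs.IsRightInversion (cs.wordProd ω₂) t :=
    cs.isRightInversion_of_mem_rightInvSeq hω₂ hmem₂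
  rw [← hprod₂] at hinv₂
  have : cs.length (cs.wordProd ω * t * t) < cs.length (cs.wordProd ω * t) := hinv₂.2
  rw [mul_assoc, ht.1.mul_self, mul_one] at this
  exact Nat.lt_asymm ht.2 this

/-- the strong exchange property -/
private lemma exists_eraseIdx_of_isRightInversion {ω : List B} (hω : cs.IsReduced ω) {t : W}
    (ht : cs.IsRightInversion (cs.wordProd ω) t) :
    ∃ j, j < ω.length ∧ cs.wordProd ω * t = cs.wordProd (ω.eraseIdx j) := by
  have hmem := cs.mem_rightInvSeq_of_isRightInversion hω ht
  obtain ⟨j, hj, hget⟩ := List.mem_iff_getElem.mp hmem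
  rw [cs.length_rightInvSeq] at hj
  refine ⟨j, hj, ?_⟩
  rw [← cs.wordProd_mul_getD_rightInvSeq ω j]
  congr 1
  rw [List.getD_eq_getElem _ 1 (by rwa [cs.length_rightInvSeq])]
  exact hget.symm

private lemma mem_rightInvSeq_append_right {ω ω' : List B} {t : W}
    (ht : t ∈ cs.rightInvSeq ω') : t ∈ cs.rightInvSeq (ω ++ ω') := by
  induction ω with
  | nil => simpa using ht
  | cons i ω ih =>
    have : cs.rightInvSeq ((i :: ω) ++ ω') =
        (cs.wordProd (ω ++ ω'))⁻¹ * cs.simple i * cs.wordProd (ω ++ ω') ::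
          cs.rightInvSeq (ω ++ ω') := rfl
    rw [this]
    exact List.mem_cons_of_mem _ ih

/-- key invariant: the Hecke product of `u` with a reduced word `l` has a reduced word
ending in `l`. -/
private lemma heckeWord_exists_reduced_suffix (l : List B) :
    ∀ u : W, cs.IsReduced l →
      ∃ l₁ : List B, cs.IsReduced (l₁ ++ l) ∧ cs.heckeWord u l = cs.wordProd (l₁ ++ l) := by
  induction l using List.reverseRecOn with
  | nil =>
    intro u _
    obtain ⟨l₁, h₁, h₂⟩ := cs.exists_reduced_word' u
    exact ⟨l₁, by simpa using h₁, by simp [heckeWord, h₂]⟩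
  | append_singleton l i ih =>
    intro u hred
    have hl : cs.IsReduced l := by
      have := hred.take l.length
      simpa [List.take_left] using this
    obtain ⟨l₁, h₁, h₂⟩ := ih u hl
    set w := cs.heckeWord u l with hwdef
    have hw : cs.heckeWord u (l ++ [i]) = cs.heckeStep w i := by
      rw [heckeWord, List.foldl_append]
      rfl
    have hlenl : cs.length (cs.wordProd l * cs.simple i) = l.length + 1 := by
      have h6 : cs.length (cs.wordProd (l ++ [i])) = (l ++ [i]).length := hred
      rw [cs.wordProd_append, cs.wordProd_singleton] at h6
      simpa using h6
    have hlw : cs.length w = l₁.length + l.length := by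
      rw [h₂]
      have := h₁
      rw [IsReduced] at this
      simpa using this
    by_cases hc : cs.length w < cs.length (w * cs.simple i)
    · refine ⟨l₁, ?_, ?_⟩
      · have hws : cs.wordProd (l₁ ++ (l ++ [i])) = w * cs.simple i := by
          rw [← List.append_assoc, cs.wordProd_append, cs.wordProd_singleton, ← h₂]
        have hlen : cs.length (w * cs.simple i) = cs.length w + 1 := by
          rcases cs.length_mul_simple w i with h | h
          · exact h
          · omega
        rw [IsReduced, hws, hlen, hlw]
        simp
        omega
      · rw [hw, heckeStep, if_pos hc, ← List.append_assoc, cs.wordProd_append,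
          cs.wordProd_singleton, ← h₂]
    · have hlt : cs.length (w * cs.simple i) < cs.length w := by
        have hne := cs.length_mul_simple_ne w i
        omega
      have hinv : cs.IsRightInversion (cs.wordProd (l₁ ++ l)) (cs.simple i) := by
        rw [← h₂]
        exact ⟨cs.isReflection_simple i, hlt⟩
      obtain ⟨j, hj, hex⟩ := cs.exists_eraseIdx_of_isRightInversion h₁ hinv
      rw [← h₂] at hex
      have hjlt : j < l₁.length := by
        by_contra hge
        push_neg at hge
        have herase : (l₁ ++ l).eraseIdx j = l₁ ++ l.eraseIdx (j - l₁.length) :=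
          List.eraseIdx_append_of_length_le hge l
        have hcontr : cs.wordProd l * cs.simple i =
            cs.wordProd (l.eraseIdx (j - l₁.length)) := by
          have h7 : cs.wordProd l₁ * (cs.wordProd l * cs.simple i) =
              cs.wordProd l₁ * cs.wordProd (l.eraseIdx (j - l₁.length)) := by
            rw [← mul_assoc, ← cs.wordProd_append, ← h₂, hex, herase, cs.wordProd_append]
          exact mul_left_cancel h7
        have hle : cs.length (cs.wordProd l * cs.simple i) ≤ l.length := by
          rw [hcontr]
          calc cs.length (cs.wordProd (l.eraseIdx (j - l₁.length)))
              ≤ (l.eraseIdx (j - l₁.length)).length := cs.length_wordProd_le _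
            _ ≤ l.length := List.length_eraseIdx_le _ _
        omega
      have herase : (l₁ ++ l).eraseIdx j = l₁.eraseIdx j ++ l :=
        List.eraseIdx_append_of_lt_length hjlt l
      refine ⟨l₁.eraseIdx j, ?_, ?_⟩
      · have hw2 : w = cs.wordProd (l₁.eraseIdx j ++ (l ++ [i])) := by
          have hstep1 : w * cs.simple i = cs.wordProd (l₁.eraseIdx j ++ l) := by
            rw [hex, herase]
          rw [← List.append_assoc, cs.wordProd_append, cs.wordProd_singleton, ← hstep1,
            cs.simple_mul_simple_cancel_right]
        rw [IsReduced, ← hw2, hlw]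
        have : (l₁.eraseIdx j).length = l₁.length - 1 := List.length_eraseIdx_of_lt hjlt
        simp [this]
        omega
      · rw [hw, heckeStep, if_neg hc]
        have hstep1 : w * cs.simple i = cs.wordProd (l₁.eraseIdx j ++ l) := by
          rw [hex, herase]
        rw [← List.append_assoc, cs.wordProd_append, cs.wordProd_singleton, ← hstep1,
          cs.simple_mul_simple_cancel_right]

end CoxeterSystem

end

/-- `I(v) ⊆ I(u · v)` for the Hecke product. -/
theorem invSet_subset_heckeMul
    {B W : Type*} [Group W] {M : CoxeterMatrix B} (cs : CoxeterSystem M W)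
    (u v : W) :
    cs.invSet v ⊆ cs.invSet (cs.heckeMul u v) := by
  intro t ht
  obtain ⟨hred, hv⟩ := (cs.exists_reduced_word' v).choose_spec
  set l := (cs.exists_reduced_word' v).choose with hl
  have htinv : cs.IsRightInversion (cs.wordProd l) t := by
    rw [← hv]; exact ht
  obtain ⟨l₁, h₁, h₂⟩ := cs.heckeWord_exists_reduced_suffix l u hred
  have hmem : t ∈ cs.rightInvSeq l := cs.mem_rightInvSeq_of_isRightInversion hred htinv
  have hmem2 : t ∈ cs.rightInvSeq (l₁ ++ l) := cs.mem_rightInvSeq_append_right hmem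
  have hfinal := cs.isRightInversion_of_mem_rightInvSeq h₁ hmem2
  show cs.IsRightInversion (cs.heckeMul u v) t
  rw [CoxeterSystem.heckeMul, ← hl, h₂]
  exact hfinal
end

section
/- Let γ ∈ Δ \ Δ_P and let w_P be the longest element of the parabolic subgroup W_P. Then w_P(γ) is the largest root in the set R ∩ (γ + ℤΔ_P), with respect to the partial order on the root lattice given by nonnegative combinations of simple roots. -/
open scoped RealInnerProductSpace

noncomputable section

variable {V : Type*} [NormedAddCommGroup V] [InnerProductSpace ℝ V]

/-- The reflection in a vector `α`: `γ ↦ γ − (2⟪α,γ⟫/⟪α,α⟫)·α` (identity if `α = 0`). -/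
def reflE (α : V) : V ≃ₗ[ℝ] V :=
  if h : ⟪α, α⟫ = (0 : ℝ) then LinearEquiv.refl ℝ V
  else
    Module.reflection (f := (2 / ⟪α, α⟫) • ((innerSL ℝ α).toLinearMap)) (x := α)
      (by
        simp only [LinearMap.smul_apply, ContinuousLinearMap.coe_coe, innerSL_apply_apply,
          smul_eq_mul]
        field_simp)

/-- Data of a (crystallographic) root system, realized in a real inner product space,
together with a choice of simple roots. -/
structure RootSystemData (V : Type*) [NormedAddCommGroup V] [InnerProductSpace ℝ V] where
  /-- the set of roots -/
  R : Finset V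
  /-- the simple roots -/
  Δ : Finset V
  ne_zero : ∀ α ∈ R, α ≠ 0
  simple_mem : ∀ β ∈ Δ, β ∈ R
  indep : LinearIndependent ℝ (fun β : Δ => (β : V))
  crystal : ∀ α ∈ R, ∀ γ ∈ R, ∃ n : ℤ, 2 * ⟪γ, α⟫ / ⟪α, α⟫ = (n : ℝ)
  refl_mem : ∀ α ∈ R, ∀ γ ∈ R, reflE α γ ∈ R
  pos_or_neg : ∀ α ∈ R,
    (∃ c : V → ℝ, (∀ v, 0 ≤ c v) ∧ α = ∑ β ∈ Δ, c β • β) ∨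
    (∃ c : V → ℝ, (∀ v, 0 ≤ c v) ∧ -α = ∑ β ∈ Δ, c β • β)

/-- the coroot `α∨ = 2α/(α,α)` -/
def coroot (α : V) : V := (2 / ⟪α, α⟫) • α

namespace RootSystemData

variable (rs : RootSystemData V)

/-- positive roots -/
def IsPos (α : V) : Prop :=
  α ∈ rs.R ∧ ∃ c : V → ℝ, (∀ v, 0 ≤ c v) ∧ α = ∑ β ∈ rs.Δ, c β • β

/-- the partial order on the root lattice: `y − x` is a nonnegative combination of
the simple roots -/
def rootLE (x y : V) : Prop :=
  ∃ c : V → ℝ, (∀ v, 0 ≤ c v) ∧ y - x = ∑ β ∈ rs.Δ, c β • β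

/-- the partial order on degrees: `y − x` is a nonnegative combination of the
simple coroots -/
def corootLE (x y : V) : Prop :=
  ∃ c : V → ℝ, (∀ v, 0 ≤ c v) ∧ y - x = ∑ β ∈ rs.Δ, c β • coroot β

/-- an effective degree -/
def Effective (d : V) : Prop := rs.corootLE 0 d

/-- `α` is a maximal root of the degree `d`, i.e. a maximal element of
`{γ ∈ R⁺ : γ∨ ≤ d}` -/
def IsMaxRoot (d α : V) : Prop :=
  rs.IsPos α ∧ rs.corootLE (coroot α) d ∧
    ∀ γ, rs.IsPos γ → rs.corootLE (coroot γ) d → rs.rootLE α γ → γ = α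

/-- a cosmall root: a maximal root of its own coroot degree -/
def IsCosmall (α : V) : Prop := rs.IsMaxRoot (coroot α) α

/-- the length of a Weyl group element: the number of positive roots sent to
negative roots -/
def len (w : V ≃ₗ[ℝ] V) : ℕ := Set.ncard {γ | rs.IsPos γ ∧ ¬ rs.IsPos (w γ)}

/-- the Bruhat order on the Weyl group -/
def bruhatLE (x y : V ≃ₗ[ℝ] V) : Prop :=
  Relation.ReflTransGen
    (fun a b => ∃ α ∈ rs.R, b = a * reflE α ∧ rs.len a < rs.len b) x y

/-- the support of a root: the simple roots below it -/
def supp (α : V) : Set V := {β | β ∈ rs.Δ ∧ rs.rootLE β α}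

/-- two roots are separated if every simple root in the support of one is
perpendicular to every simple root in the support of the other -/
def Separated (α β : V) : Prop :=
  ∀ x ∈ rs.supp α, ∀ y ∈ rs.supp β, ⟪x, y⟫ = (0 : ℝ)

end RootSystemData

/-- greedy decompositions of an effective degree -/
inductive RootSystemData.Greedy (rs : RootSystemData V) : V → List V → Prop
  | nil : rs.Greedy 0 []
  | cons {d α l} : rs.IsMaxRoot d α → rs.Greedy (d - coroot α) l →
      rs.Greedy d (α :: l)

/-- The Hecke product on the Weyl group, given axiomatically: it is associative,
unital, and is given on simple reflections by the usual Demazure recipe. -/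
structure HeckeData (rs : RootSystemData V) where
  hmul : (V ≃ₗ[ℝ] V) → (V ≃ₗ[ℝ] V) → (V ≃ₗ[ℝ] V)
  hmul_assoc : ∀ u v w, hmul (hmul u v) w = hmul u (hmul v w)
  one_hmul : ∀ u, hmul 1 u = u
  hmul_one : ∀ u, hmul u 1 = u
  hmul_simple : ∀ u (β : V), β ∈ rs.Δ →
    hmul u (reflE β) =
      if rs.len u < rs.len (u * reflE β) then u * reflE β else u

/-- the Hecke product `s_{α₁} · s_{α₂} · … · s_{α_k}` of the reflections in a list
of roots -/
def HeckeData.zOf {rs : RootSystemData V} (H : HeckeData rs) (l : List V) :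
    (V ≃ₗ[ℝ] V) :=
  l.foldl (fun w α => H.hmul w (reflE α)) 1

end


open scoped RealInnerProductSpace in
private lemma reflE_apply' {V : Type*} [NormedAddCommGroup V] [InnerProductSpace ℝ V]
    {α : V} (hα : α ≠ 0) (y : V) :
    reflE α y = y - ((2 / ⟪α, α⟫) * ⟪α, y⟫) • α := by
  rw [reflE, dif_neg (fun h => hα ((inner_self_eq_zero (𝕜 := ℝ)).mp h))]
  rw [Module.reflection_apply]
  simp

open scoped RealInnerProductSpace in
private lemma key_act {V : Type*} [NormedAddCommGroup V] [InnerProductSpace ℝ V]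
    (rs : RootSystemData V) (ΔP : Finset V) (hΔP : ΔP ⊆ rs.Δ)
    {w : V ≃ₗ[ℝ] V}
    (hw : w ∈ Subgroup.closure {w : V ≃ₗ[ℝ] V | ∃ δ ∈ ΔP, w = reflE δ}) :
    ∀ ρ ∈ rs.R, w ρ ∈ rs.R ∧ w ρ - ρ ∈ AddSubgroup.closure (ΔP : Set V) := by
  classical
  induction hw using Subgroup.closure_induction with
  | mem x hx =>
      obtain ⟨δ, hδ, rfl⟩ := hx
      intro ρ hρ
      have hδΔ := hΔP hδ
      have hδR := rs.simple_mem δ hδΔ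
      refine ⟨rs.refl_mem δ hδR ρ hρ, ?_⟩
      obtain ⟨n, hn⟩ := rs.crystal δ hδR ρ hρ
      have hδ0 := rs.ne_zero δ hδR
      rw [reflE_apply' hδ0]
      have hco : (2 / ⟪δ, δ⟫) * ⟪δ, ρ⟫ = (n : ℝ) := by
        rw [← hn, real_inner_comm ρ δ]; ring
      have heq : ρ - ((2 / ⟪δ, δ⟫) * ⟪δ, ρ⟫) • δ - ρ = (-n : ℤ) • δ := by
        rw [hco, ← Int.cast_smul_eq_zsmul ℝ (-n) δ]
        push_cast
        module
      rw [heq]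
      exact zsmul_mem (AddSubgroup.subset_closure (by simpa using hδ)) _
  | one =>
      intro ρ hρ
      exact ⟨by simpa using hρ, by simpa using zero_mem (AddSubgroup.closure (ΔP : Set V))⟩
  | mul x y hx hy ihx ihy =>
      intro ρ hρ
      obtain ⟨h1, h2⟩ := ihy ρ hρ
      obtain ⟨h3, h4⟩ := ihx (y ρ) h1
      refine ⟨h3, ?_⟩
      have : (x * y) ρ - ρ = (x (y ρ) - y ρ) + (y ρ - ρ) := by
        show x (y ρ) - ρ = _
        abel
      rw [this]
      exact add_mem h4 h2
  | inv x hx ihx =>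
      intro ρ hρ
      have himg : rs.R.image x = rs.R :=
        Finset.eq_of_subset_of_card_le
          (fun a ha => by
            obtain ⟨b, hb, rfl⟩ := Finset.mem_image.mp ha
            exact (ihx b hb).1)
          (by rw [Finset.card_image_of_injective _ x.injective])
      obtain ⟨b, hb, hbe⟩ := Finset.mem_image.mp (himg ▸ hρ)
      have hxb : x⁻¹ ρ = b := by rw [← hbe]; exact x.symm_apply_apply b
      rw [hxb]
      refine ⟨hb, ?_⟩
      have : b - ρ = -(x b - b) := by rw [← hbe]; abel
      rw [this]
      exact neg_mem (ihx b hb).2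

private lemma coeff_zero {V : Type*} [NormedAddCommGroup V] [InnerProductSpace ℝ V]
    (rs : RootSystemData V) {g : V → ℝ}
    (h : ∑ β ∈ rs.Δ, g β • β = 0) : ∀ β ∈ rs.Δ, g β = 0 := by
  intro β hβ
  have h' : ∑ x ∈ Finset.univ, g ((fun b : rs.Δ => (b : V)) x) •
      ((fun b : rs.Δ => (b : V)) x) = 0 := by
    rw [show (Finset.univ : Finset rs.Δ) = rs.Δ.attach from rfl,
      Finset.sum_attach rs.Δ (fun b => g b • b)]
    exact h
  exact linearIndependent_iff'.mp rs.indep Finset.univ (fun b => g (b : V)) h'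
    ⟨β, hβ⟩ (Finset.mem_univ _)

/-- For `γ ∈ Δ \\ Δ_P` and `w_P` the longest element of `W_P` (characterized as an
element of `W_P` sending every simple root of `Δ_P` to a negative root), `w_P(γ)` is
the largest root in `R ∩ (γ + ℤΔ_P)`. -/
theorem wP_apply_is_largest_root
    {V : Type*} [NormedAddCommGroup V] [InnerProductSpace ℝ V]
    (rs : RootSystemData V) (ΔP : Finset V) (hΔP : ΔP ⊆ rs.Δ)
    (γ : V) (hγ : γ ∈ rs.Δ) (hγP : γ ∉ ΔP)
    (wP : V ≃ₗ[ℝ] V)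
    (hwP : wP ∈ Subgroup.closure {w : V ≃ₗ[ℝ] V | ∃ δ ∈ ΔP, w = reflE δ})
    (hlong : ∀ δ ∈ ΔP, wP δ ∈ rs.R ∧ ¬ rs.IsPos (wP δ)) :
    (wP γ ∈ rs.R ∧ wP γ - γ ∈ AddSubgroup.closure (ΔP : Set V)) ∧
    (∀ ρ ∈ rs.R, ρ - γ ∈ AddSubgroup.closure (ΔP : Set V) → rs.rootLE ρ (wP γ))    := by
  classical
  have hγR := rs.simple_mem γ hγ
  obtain ⟨h1, h2⟩ := key_act rs ΔP hΔP hwP γ hγR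
  refine ⟨⟨h1, h2⟩, ?_⟩
  intro ρ hρ hdiff
  obtain ⟨h3, h4⟩ := key_act rs ΔP hΔP (inv_mem hwP) ρ hρ
  set σ := wP⁻¹ ρ with hσdef
  have hσγ : σ - γ ∈ AddSubgroup.closure (ΔP : Set V) := by
    have he : σ - γ = (σ - ρ) + (ρ - γ) := by abel
    rw [he]; exact add_mem h4 hdiff
  have hspan : σ - γ ∈ Submodule.span ℝ (ΔP : Set V) :=
    ((AddSubgroup.closure_le ((Submodule.span ℝ (ΔP : Set V)).toAddSubgroup)).mpr
      Submodule.subset_span) hσγ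
  obtain ⟨c, -, hc⟩ := Submodule.mem_span_finset.mp hspan
  have hσ_expand : σ = γ + ∑ β ∈ ΔP, c β • β := by
    rw [hc]; abel
  have e1 : ∑ β ∈ rs.Δ, (if β = γ then (1:ℝ) else 0) • β = γ := by
    simp [ite_smul, Finset.sum_ite_eq', hγ]
  have e2 : ∑ β ∈ rs.Δ, (if β ∈ ΔP then c β else 0) • β = ∑ β ∈ ΔP, c β • β := by
    simp only [ite_smul, zero_smul]
    rw [Finset.sum_ite_mem, Finset.inter_eq_right.mpr hΔP]
  rcases rs.pos_or_neg σ h3 with ⟨d, hd0, hd⟩ | ⟨d, hd0, hd⟩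
  swap
  · -- σ negative: contradiction
    exfalso
    set g : V → ℝ := fun β =>
      (if β = γ then (1:ℝ) else 0) + (if β ∈ ΔP then c β else 0) + d β with hg
    have hzero : ∑ β ∈ rs.Δ, g β • β = 0 := by
      simp only [hg, add_smul, Finset.sum_add_distrib, e1, e2, hc, ← hd]
      abel
    have hgγ := coeff_zero rs hzero γ hγ
    simp only [hg, if_pos rfl, if_true, if_neg hγP] at hgγ
    linarith [hd0 γ]
  · -- σ positive
    have hccoef : ∀ β ∈ ΔP, c β = d β := by
      intro β hβ
      set g : V → ℝ := fun β =>
        d β - (if β = γ then (1:ℝ) else 0) - (if β ∈ ΔP then c β else 0) with hg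
      have hzero : ∑ β ∈ rs.Δ, g β • β = 0 := by
        simp only [hg, sub_smul, Finset.sum_sub_distrib, e1, e2, hc, ← hd]
        abel
      have hgβ := coeff_zero rs hzero β (hΔP hβ)
      have hβγ : β ≠ γ := fun h => hγP (h ▸ hβ)
      simp only [hg, if_neg hβγ, if_pos hβ] at hgβ
      linarith
    have hρ_eq : ρ = wP γ + ∑ β ∈ ΔP, c β • wP β := by
      have hws : wP σ = ρ := wP.apply_symm_apply ρ
      rw [← hws, hσ_expand]
      rw [map_add, map_sum]
      simp only [map_smul]
    have hneg : ∀ β ∈ ΔP, ∃ fc : V → ℝ, (∀ v, 0 ≤ fc v) ∧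
        -(wP β) = ∑ v ∈ rs.Δ, fc v • v := by
      intro β hβ
      obtain ⟨hR, hnp⟩ := hlong β hβ
      rcases rs.pos_or_neg _ hR with h | h
      · exact absurd ⟨hR, h⟩ hnp
      · exact h
    choose! f hf0 hfs using hneg
    refine ⟨fun v => ∑ β ∈ ΔP, c β * f β v, fun v =>
      Finset.sum_nonneg fun β hβ => mul_nonneg (by rw [hccoef β hβ]; exact hd0 β)
        (hf0 β hβ v), ?_⟩
    calc wP γ - ρ = -∑ β ∈ ΔP, c β • wP β := by rw [hρ_eq]; abel
      _ = ∑ β ∈ ΔP, c β • (-(wP β)) := by rw [← Finset.sum_neg_distrib]; simp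
      _ = ∑ β ∈ ΔP, c β • ∑ v ∈ rs.Δ, f β v • v :=
          Finset.sum_congr rfl fun β hβ => by rw [← hfs β hβ]
      _ = ∑ β ∈ ΔP, ∑ v ∈ rs.Δ, (c β * f β v) • v := by
          simp only [Finset.smul_sum, smul_smul]
      _ = ∑ v ∈ rs.Δ, ∑ β ∈ ΔP, (c β * f β v) • v := Finset.sum_comm
      _ = ∑ v ∈ rs.Δ, (∑ β ∈ ΔP, c β * f β v) • v := by
          simp only [Finset.sum_smul]
end
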